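/- Let θ ≥ 0 be such that (i) there exists a feasible s–t path all of whose edges have cost c(e) ≤ θ, and (ii) every feasible s–t path contains at least one edge with cost c(e) ≥ θ. Then θ ≤ C_opt(G) ≤ n·θ. -/

import Mathlib

/-- `IsWalk tl hd u v p` : the list of edges `p` forms a walk from `u` to `v`
in the directed multigraph whose edges `e` go from `tl e` to `hd e`. -/
def IsWalk {V E : Type} (tl hd : E → V) : V → V → List E → Prop
  | u, v, [] => u = v
  | u, v, e :: es => tl e = u ∧ IsWalk tl hd (hd e) v es

/-- `IsPath tl hd u v p` : `p` is a walk from `u` to `v` visiting pairwise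
distinct vertices. -/
def IsPath {V E : Type} (tl hd : E → V) (u v : V) (p : List E) : Prop :=
  IsWalk tl hd u v p ∧ (u :: p.map hd).Nodup

lemma single_le_sum_of_mem {E : Type} (c : E → ℝ) (hc : ∀ e, 0 ≤ c e)
    (p : List E) (e : E) (he : e ∈ p) : c e ≤ (p.map c).sum := by
  induction p with
  | nil => simp at he
  | cons a l ih =>
    simp only [List.map_cons, List.sum_cons]
    rcases List.mem_cons.1 he with h | h
    · subst h
      have : 0 ≤ (l.map c).sum := List.sum_nonneg (by
        intro x hx; obtain ⟨y, _, rfl⟩ := List.mem_map.1 hx; exact hc y)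
      linarith
    · have := ih h; have := hc a; linarith

lemma sum_le_len_mul {E : Type} (c : E → ℝ) (θ : ℝ) (p : List E)
    (h : ∀ e ∈ p, c e ≤ θ) : (p.map c).sum ≤ p.length * θ := by
  induction p with
  | nil => simp
  | cons a l ih =>
    simp only [List.map_cons, List.sum_cons, List.length_cons]
    have h1 := h a List.mem_cons_self
    have h2 := ih (fun e he => h e (List.mem_cons_of_mem a he))
    push_cast
    nlinarith

/-- Lemma: if some feasible s–t path uses only edges of cost `≤ θ`, and every
feasible s–t path contains an edge of cost `≥ θ`, then `θ ≤ C_opt(G) ≤ n·θ`. -/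
theorem stmt_4 {V E : Type} [Fintype V] [Fintype E]
    (tl hd : E → V) (c r : E → ℝ)
    (hc : ∀ e, 0 ≤ c e) (hr : ∀ e, 0 ≤ r e)
    (hn : 2 ≤ Fintype.card V)
    (s t : V) (hst : s ≠ t) (R : ℝ) (hR : 0 ≤ R)
    -- `Copt` is the minimum cost of a feasible s–t path
    (Copt : ℝ)
    (hCopt₁ : ∃ p, IsPath tl hd s t p ∧ (p.map r).sum ≤ R ∧ (p.map c).sum = Copt)
    (hCopt₂ : ∀ p, IsPath tl hd s t p → (p.map r).sum ≤ R → Copt ≤ (p.map c).sum)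
    (θ : ℝ) (hθ : 0 ≤ θ)
    (hlow : ∃ p, IsPath tl hd s t p ∧ (p.map r).sum ≤ R ∧ ∀ e ∈ p, c e ≤ θ)
    (hhigh : ∀ p, IsPath tl hd s t p → (p.map r).sum ≤ R → ∃ e ∈ p, θ ≤ c e) :
    θ ≤ Copt ∧ Copt ≤ Fintype.card V * θ := by
  constructor
  · obtain ⟨p, hp, hpr, hpc⟩ := hCopt₁
    obtain ⟨e, he, hθe⟩ := hhigh p hp hpr
    calc θ ≤ c e := hθe
      _ ≤ (p.map c).sum := single_le_sum_of_mem c hc p e he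
      _ = Copt := hpc
  · obtain ⟨p, hp, hpr, hpθ⟩ := hlow
    have hlen : p.length + 1 ≤ Fintype.card V := by
      have := hp.2
      have := List.Nodup.length_le_card this
      simpa using this
    calc Copt ≤ (p.map c).sum := hCopt₂ p hp hpr
      _ ≤ p.length * θ := sum_le_len_mul c θ p hpθ
      _ ≤ Fintype.card V * θ := by
          have : (p.length : ℝ) ≤ Fintype.card V := by
            have : (p.length : ℝ) + 1 ≤ Fintype.card V := by exact_mod_cast hlen
            linarith
          nlinarith
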